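/- Let n ≥ 2, let P_n be the path graph on n vertices 1,…,n, let L be its Laplacian, and let L⁺ be the Moore–Penrose pseudoinverse of L. Then for every vertex j ∈ {1,…,n}, L⁺_{j,j} = ((n − j)(n − j + 1) + j(j − 1))/(2n) − (n² − 1)/(6n). -/

import Mathlib

open Matrix


noncomputable def rhoP (n : ℕ) (x : ℝ) : ℝ := x^2 - ((n:ℝ)+1)*x + ((n:ℝ)^2+(n:ℝ))/2

noncomputable def mP (n a b : ℕ) : ℝ :=
  -|(a:ℝ) - (b:ℝ)|/2 + (rhoP n ((a:ℝ)+1) + rhoP n ((b:ℝ)+1))/(2*(n:ℝ)) - ((n:ℝ)^2-1)/(6*(n:ℝ))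

noncomputable def MmatP (n : ℕ) : Matrix (Fin n) (Fin n) ℝ :=
  Matrix.of fun i k => mP n i.val k.val

lemma absdiffP (a b : ℕ) :
    |((a:ℝ)-1) - b| + |((a:ℝ)+1) - b| - 2*|(a:ℝ)-b| = if a = b then 2 else 0 := by
  rcases lt_trichotomy a b with h|rfl|h
  · have hb : (a:ℝ) + 1 ≤ b := by exact_mod_cast h
    rw [if_neg h.ne, abs_of_nonpos (by linarith), abs_of_nonpos (by linarith),
      abs_of_nonpos (by linarith)]
    ring
  · simp only [if_pos rfl, sub_self, abs_zero]
    rw [show ((a:ℝ)-1) - a = -1 by ring, show ((a:ℝ)+1) - a = 1 by ring]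
    norm_num
  · have hb : (b:ℝ) + 1 ≤ a := by exact_mod_cast h
    rw [if_neg (by omega), abs_of_nonneg (by linarith), abs_of_nonneg (by linarith),
      abs_of_nonneg (by linarith)]
    ring

lemma sumabsP (a n : ℕ) (h : a < n) :
    ∑ k ∈ Finset.range n, |(a:ℝ) - k| = ((a:ℝ)*(a+1) + ((n:ℝ)-1-a)*((n:ℝ)-a))/2 := by
  induction n, h using Nat.le_induction with
  | base =>
    have h1 : ∀ k ∈ Finset.range (a+1), |(a:ℝ) - k| = (a:ℝ) - k := by
      intro k hk
      rw [abs_of_nonneg]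
      have : k ≤ a := by simpa using Nat.lt_succ_iff.mp (Finset.mem_range.mp hk)
      have : (k:ℝ) ≤ a := by exact_mod_cast this
      linarith
    rw [Finset.sum_congr rfl h1, Finset.sum_sub_distrib, Finset.sum_const, Finset.card_range]
    have hg : (∑ k ∈ Finset.range (a+1), (k:ℝ)) = (a:ℝ)*(a+1)/2 := by
      have := Finset.sum_range_id_mul_two (a+1)
      have hc : ((∑ k ∈ Finset.range (a+1), k : ℕ) : ℝ) * 2 = ((a+1) * a : ℕ) := by
        exact_mod_cast congrArg (Nat.cast : ℕ → ℝ) this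
      push_cast at hc
      linarith
    rw [hg]
    push_cast
    ring
  | succ m hm ih =>
    rw [Finset.sum_range_succ, ih]
    have : (a:ℝ) ≤ m := by exact_mod_cast Nat.le_of_succ_le hm
    rw [abs_of_nonpos (by linarith)]
    push_cast
    ring

lemma sumsqP (n : ℕ) : ∑ k ∈ Finset.range n, (k:ℝ)^2 = (n:ℝ)*((n:ℝ)-1)*(2*(n:ℝ)-1)/6 := by
  induction n with
  | zero => simp
  | succ m ih => rw [Finset.sum_range_succ, ih]; push_cast; ring

lemma sumidP (n : ℕ) : ∑ k ∈ Finset.range n, (k:ℝ) = (n:ℝ)*((n:ℝ)-1)/2 := by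
  induction n with
  | zero => simp
  | succ m ih => rw [Finset.sum_range_succ, ih]; push_cast; ring

lemma sumrhoP (n : ℕ) : ∑ k ∈ Finset.range n, rhoP n ((k:ℝ)+1) = (n:ℝ)*((n:ℝ)^2-1)/3 := by
  have h1 : ∀ k ∈ Finset.range n, rhoP n ((k:ℝ)+1)
      = (k:ℝ)^2 + (k:ℝ)*(1-(n:ℝ)) + (((n:ℝ)^2+(n:ℝ))/2 - (n:ℝ)) := by
    intro k _; unfold rhoP; ring
  rw [Finset.sum_congr rfl h1]
  rw [Finset.sum_add_distrib, Finset.sum_add_distrib, Finset.sum_const, Finset.card_range,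
    ← Finset.sum_mul, sumsqP, sumidP]
  ring

lemma MrowsumP {n : ℕ} (hn : 2 ≤ n) (i : Fin n) : ∑ k, MmatP n i k = 0 := by
  have hn0 : (n:ℝ) ≠ 0 := by positivity
  have h1 : ∑ k, MmatP n i k = ∑ k ∈ Finset.range n, mP n i.val k := by
    rw [← Fin.sum_univ_eq_sum_range (fun k => mP n i.val k) n]
    rfl
  rw [h1]
  have h2 : ∀ k ∈ Finset.range n, mP n i.val k
      = (-(1/2))*|(i.val:ℝ) - (k:ℝ)| + (1/(2*(n:ℝ)))*rhoP n ((k:ℝ)+1)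
        + (rhoP n ((i.val:ℝ)+1)/(2*(n:ℝ)) - ((n:ℝ)^2-1)/(6*(n:ℝ))) := by
    intro k _; unfold mP; ring
  rw [Finset.sum_congr rfl h2, Finset.sum_add_distrib, Finset.sum_add_distrib,
    ← Finset.mul_sum, ← Finset.mul_sum, Finset.sum_const, Finset.card_range,
    sumabsP _ _ i.isLt, sumrhoP]
  unfold rhoP
  simp only [nsmul_eq_mul]
  field_simp
  ring

lemma pleftP (n b : ℕ) (hn : 2 ≤ n) (hb : b < n) :
    mP n 0 b - mP n 1 b = (if 0 = b then 1 else 0) - (n:ℝ)⁻¹ := by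
  have hn0 : (n:ℝ) ≠ 0 := by positivity
  unfold mP
  by_cases hb0 : b = 0
  · subst hb0
    rw [if_pos rfl]
    push_cast
    rw [show ((0:ℝ) - 0) = 0 by ring, abs_zero, show ((1:ℝ) - 0) = 1 by ring, abs_one]
    unfold rhoP
    field_simp
    ring
  · rw [if_neg (by omega)]
    have hb1 : (1:ℝ) ≤ (b:ℝ) := by exact_mod_cast Nat.one_le_iff_ne_zero.mpr hb0
    push_cast
    rw [abs_of_nonpos (by linarith), abs_of_nonpos (by linarith)]
    unfold rhoP
    field_simp
    ring

lemma prightP (n b : ℕ) (hn : 2 ≤ n) (hb : b < n) :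
    mP n (n-1) b - mP n (n-2) b = (if n-1 = b then 1 else 0) - (n:ℝ)⁻¹ := by
  have hn0 : (n:ℝ) ≠ 0 := by positivity
  have hc1 : ((n-1:ℕ):ℝ) = (n:ℝ) - 1 := by push_cast [Nat.cast_sub (by omega : 1 ≤ n)]; ring
  have hc2 : ((n-2:ℕ):ℝ) = (n:ℝ) - 2 := by push_cast [Nat.cast_sub (by omega : 2 ≤ n)]; ring
  unfold mP
  rw [hc1, hc2]
  by_cases hbn : b = n-1
  · rw [if_pos hbn.symm]
    have hbc : (b:ℝ) = (n:ℝ) - 1 := by rw [hbn, hc1]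
    rw [hbc, show ((n:ℝ)-1) - ((n:ℝ)-1) = 0 by ring, abs_zero,
      show ((n:ℝ)-2) - ((n:ℝ)-1) = -1 by ring, abs_neg, abs_one]
    unfold rhoP
    field_simp
    ring
  · rw [if_neg (by omega)]
    have hble : (b:ℝ) ≤ (n:ℝ) - 2 := by
      have h : b ≤ n - 2 := by omega
      have h2 := (Nat.cast_le (α := ℝ)).mpr h
      rw [hc2] at h2; exact h2
    rw [abs_of_nonneg (by linarith), abs_of_nonneg (by linarith)]
    unfold rhoP
    field_simp
    ring

lemma pintP (n a b : ℕ) (hn : 2 ≤ n) (ha1 : 1 ≤ a) (hb : b < n) :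
    2 * mP n a b - mP n (a-1) b - mP n (a+1) b = (if a = b then 1 else 0) - (n:ℝ)⁻¹ := by
  have hn0 : (n:ℝ) ≠ 0 := by positivity
  have hc1 : ((a-1:ℕ):ℝ) = (a:ℝ) - 1 := by push_cast [Nat.cast_sub ha1]; ring
  have habs := absdiffP a b
  have hrho : 2 * rhoP n ((a:ℝ)+1) - rhoP n (((a:ℝ)-1)+1) - rhoP n (((a:ℝ)+1)+1) = -2 := by
    unfold rhoP; ring
  unfold mP
  rw [hc1]
  push_cast
  by_cases hab : a = b
  · rw [if_pos hab] at habs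
    rw [if_pos hab]
    linear_combination habs/2 + hrho/(2*(n:ℝ))
  · rw [if_neg hab] at habs
    rw [if_neg hab]
    linear_combination habs/2 + hrho/(2*(n:ℝ))

lemma LrowP {n : ℕ} (hn : 2 ≤ n) (L : Matrix (Fin n) (Fin n) ℝ)
    (hLdef : ∀ i j : Fin n, L i j =
      if i = j then (if i.val = 0 ∨ i.val = n - 1 then 1 else 2)
      else if i.val + 1 = j.val ∨ j.val + 1 = i.val then -1 else 0)
    (i : Fin n) (f : Fin n → ℝ) :
    ∑ j, L i j * f j =
      (if i.val = 0 ∨ i.val = n-1 then 1 else 2) * f i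
      - (if i.val = 0 then 0 else f ⟨i.val - 1, Nat.lt_of_le_of_lt (Nat.sub_le _ _) i.isLt⟩)
      - (if i.val = n-1 then 0
          else f ⟨min (i.val+1) (n-1), lt_of_le_of_lt (min_le_right _ _) (by omega)⟩) := by
  have hi := i.isLt
  by_cases h0 : i.val = 0
  · have hne : i.val ≠ n - 1 := by omega
    set ip : Fin n := ⟨min (i.val+1) (n-1), lt_of_le_of_lt (min_le_right _ _) (by omega)⟩ with hip
    have hipv : ip.val = 1 := by simp [hip]; omega
    have hii : i ≠ ip := by intro h; rw [h] at h0; omega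
    have key : ∀ j, L i j * f j =
        (if j = i then 1 * f j else 0) + (if j = ip then (-1) * f j else 0) := by
      intro j
      rcases eq_or_ne j i with rfl | hji
      · rw [hLdef, if_pos rfl, if_pos (Or.inl h0), if_pos rfl, if_neg (by
          intro h; exact hii (h ▸ rfl))]
        ring
      · rcases eq_or_ne j ip with rfl | hjp
        · rw [hLdef, if_neg (Ne.symm hji), if_pos (by left; omega), if_neg hji, if_pos rfl]
          ring
        · rw [hLdef, if_neg (Ne.symm hji), if_neg (by
            rintro (h | h)
            · exact hjp (Fin.ext (by omega))
            · omega), if_neg hji, if_neg hjp]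
          ring
    rw [Finset.sum_congr rfl (fun j _ => key j), Finset.sum_add_distrib,
      Finset.sum_ite_eq' Finset.univ i, Finset.sum_ite_eq' Finset.univ ip,
      if_pos (Finset.mem_univ _), if_pos (Finset.mem_univ _),
      if_pos (Or.inl h0), if_pos h0, if_neg hne]
    ring
  · by_cases h1 : i.val = n - 1
    · set im : Fin n := ⟨i.val - 1, Nat.lt_of_le_of_lt (Nat.sub_le _ _) i.isLt⟩ with him
      have himv : im.val = i.val - 1 := rfl
      have hii : i ≠ im := by intro h; have := congrArg Fin.val h; simp [himv] at this; omega
      have key : ∀ j, L i j * f j =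
          (if j = i then 1 * f j else 0) + (if j = im then (-1) * f j else 0) := by
        intro j
        rcases eq_or_ne j i with rfl | hji
        · rw [hLdef, if_pos rfl, if_pos (Or.inr h1), if_pos rfl, if_neg (by
            intro h; exact hii (h ▸ rfl))]
          ring
        · rcases eq_or_ne j im with rfl | hjm
          · rw [hLdef, if_neg (Ne.symm hji), if_pos (by right; simp [himv]; omega),
              if_neg hji, if_pos rfl]
            ring
          · rw [hLdef, if_neg (Ne.symm hji), if_neg (by
              rintro (h | h)
              · have := j.isLt; omega
              · exact hjm (Fin.ext (by simp [himv]; omega))), if_neg hji, if_neg hjm]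
            ring
      rw [Finset.sum_congr rfl (fun j _ => key j), Finset.sum_add_distrib,
        Finset.sum_ite_eq' Finset.univ i, Finset.sum_ite_eq' Finset.univ im,
        if_pos (Finset.mem_univ _), if_pos (Finset.mem_univ _),
        if_pos (Or.inr h1), if_neg h0, if_pos h1]
      ring
    · set im : Fin n := ⟨i.val - 1, Nat.lt_of_le_of_lt (Nat.sub_le _ _) i.isLt⟩ with him
      set ip : Fin n := ⟨min (i.val+1) (n-1), lt_of_le_of_lt (min_le_right _ _) (by omega)⟩
        with hip
      have himv : im.val = i.val - 1 := rfl
      have hipv : ip.val = i.val + 1 := by simp [hip]; omega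
      have hiim : i ≠ im := by
        intro h; have := congrArg Fin.val h; rw [himv] at this; omega
      have hiip : i ≠ ip := by
        intro h; have := congrArg Fin.val h; rw [hipv] at this; omega
      have himp : im ≠ ip := by
        intro h; have := congrArg Fin.val h; rw [himv, hipv] at this; omega
      have key : ∀ j, L i j * f j =
          (if j = i then 2 * f j else 0) + (if j = im then (-1) * f j else 0)
            + (if j = ip then (-1) * f j else 0) := by
        intro j
        rcases eq_or_ne j i with rfl | hji
        · rw [hLdef, if_pos rfl, if_neg (by push_neg; exact ⟨h0, h1⟩), if_pos rfl,
            if_neg hiim, if_neg hiip]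
          ring
        · rcases eq_or_ne j im with rfl | hjm
          · rw [hLdef, if_neg (Ne.symm hji), if_pos (by right; rw [himv]; omega),
              if_neg hji, if_pos rfl, if_neg himp]
            ring
          · rcases eq_or_ne j ip with rfl | hjp
            · rw [hLdef, if_neg (Ne.symm hji), if_pos (by left; rw [hipv]),
                if_neg hji, if_neg hjm, if_pos rfl]
              ring
            · rw [hLdef, if_neg (Ne.symm hji), if_neg (by
                rintro (h | h)
                · exact hjp (Fin.ext (by rw [hipv]; omega))
                · exact hjm (Fin.ext (by rw [himv]; omega))), if_neg hji, if_neg hjm,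
                if_neg hjp]
              ring
      rw [Finset.sum_congr rfl (fun j _ => key j), Finset.sum_add_distrib,
        Finset.sum_add_distrib,
        Finset.sum_ite_eq' Finset.univ i, Finset.sum_ite_eq' Finset.univ im,
        Finset.sum_ite_eq' Finset.univ ip,
        if_pos (Finset.mem_univ _), if_pos (Finset.mem_univ _), if_pos (Finset.mem_univ _),
        if_neg (by push_neg; exact ⟨h0, h1⟩), if_neg h0, if_neg h1]
      ring

lemma hLMP {n : ℕ} (hn : 2 ≤ n) (L : Matrix (Fin n) (Fin n) ℝ)
    (hLdef : ∀ i j : Fin n, L i j =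
      if i = j then (if i.val = 0 ∨ i.val = n - 1 then 1 else 2)
      else if i.val + 1 = j.val ∨ j.val + 1 = i.val then -1 else 0) :
    L * MmatP n = 1 - (n:ℝ)⁻¹ • Matrix.of (fun _ _ => (1:ℝ)) := by
  ext i k
  rw [Matrix.mul_apply, LrowP hn L hLdef i (fun j => MmatP n j k)]
  have hi := i.isLt
  have hE : (1 - (n:ℝ)⁻¹ • Matrix.of (fun _ _ => (1:ℝ))) i k
      = (if i.val = k.val then (1:ℝ) else 0) - (n:ℝ)⁻¹ := by
    simp [Matrix.sub_apply, Matrix.one_apply, Fin.ext_iff]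
  rw [hE]
  simp only [MmatP, Matrix.of_apply]
  by_cases h0 : i.val = 0
  · have hne : i.val ≠ n - 1 := by omega
    rw [if_pos (Or.inl h0), if_pos h0, if_neg hne]
    simp only [h0]
    rw [show min (0+1) (n-1) = 1 from by omega]
    rw [one_mul, sub_zero]
    exact pleftP n k.val hn k.isLt
  · by_cases h1 : i.val = n - 1
    · rw [if_pos (Or.inr h1), if_neg h0, if_pos h1]
      simp only [h1]
      rw [show n - 1 - 1 = n - 2 from by omega]
      rw [one_mul, sub_zero]
      exact prightP n k.val hn k.isLt
    · rw [if_neg (by push_neg; exact ⟨h0, h1⟩), if_neg h0, if_neg h1]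
      rw [show min (i.val+1) (n-1) = i.val + 1 from by omega]
      exact pintP n i.val k.val hn (by omega) k.isLt

/-- Diagonal of the pseudoinverse of the path Laplacian. Let `L` be the Laplacian
of the path graph on `n ≥ 2` vertices `1, …, n` (vertex `j` corresponds to `j' : Fin n` with
`j = j'.val + 1`) and `Lp` its Moore–Penrose pseudoinverse. Then for every vertex `j`,
`L⁺ⱼⱼ = ((n−j)(n−j+1) + j(j−1))/(2n) − (n²−1)/(6n)`. -/
theorem stmt_18 {n : ℕ} (hn : 2 ≤ n)
    (L Lp : Matrix (Fin n) (Fin n) ℝ)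
    (hLdef : ∀ i j : Fin n, L i j =
      if i = j then (if i.val = 0 ∨ i.val = n - 1 then 1 else 2)
      else if i.val + 1 = j.val ∨ j.val + 1 = i.val then -1 else 0)
    (hp1 : L * Lp * L = L) (hp2 : Lp * L * Lp = Lp)
    (hp3 : (L * Lp)ᵀ = L * Lp) (hp4 : (Lp * L)ᵀ = Lp * L)
    (j' : Fin n) :
    Lp j' j' =
      (((n : ℝ) - ((j'.val : ℝ) + 1)) * ((n : ℝ) - ((j'.val : ℝ) + 1) + 1)
          + ((j'.val : ℝ) + 1) * (((j'.val : ℝ) + 1) - 1)) / (2 * (n : ℝ))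
        - ((n : ℝ) ^ 2 - 1) / (6 * (n : ℝ)) := by
  have hn0 : (n:ℝ) ≠ 0 := by positivity
  set M := MmatP n with hM
  set J : Matrix (Fin n) (Fin n) ℝ := Matrix.of (fun _ _ => (1:ℝ)) with hJ
  set E : Matrix (Fin n) (Fin n) ℝ := 1 - (n:ℝ)⁻¹ • J with hEdef
  -- symmetry of L
  have hLsym : ∀ p q : Fin n, L p q = L q p := by
    intro p q
    rw [hLdef, hLdef]
    rcases eq_or_ne p q with rfl | h
    · rfl
    · rw [if_neg h, if_neg (Ne.symm h)]
      exact if_congr or_comm rfl rfl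
  -- symmetry of M
  have hMsym : Mᵀ = M := by
    ext p q
    show MmatP n q p = MmatP n p q
    simp only [MmatP, Matrix.of_apply, mP]
    rw [abs_sub_comm]
    ring
  have hLM : L * M = E := hLMP hn L hLdef
  have hEsym : Eᵀ = E := by
    rw [hEdef, Matrix.transpose_sub, Matrix.transpose_one, Matrix.transpose_smul]
    congr 1
  have hLsymM : Lᵀ = L := by ext p q; exact hLsym q p
  have hML : M * L = E := by
    have h := Matrix.transpose_mul L M
    rw [hLM, hMsym, hLsymM, hEsym] at h
    exact h.symm
  -- J * L = 0
  have hJL : J * L = 0 := by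
    ext p q
    rw [Matrix.mul_apply]
    have h1 : ∀ j : Fin n, J p j * L j q = L q j * 1 := by
      intro j; simp [hJ, hLsym j q]
    rw [Finset.sum_congr rfl (fun j _ => h1 j), LrowP hn L hLdef q (fun _ => 1)]
    have := q.isLt
    by_cases hq0 : q.val = 0
    · rw [if_pos (Or.inl hq0), if_pos hq0, if_neg (by omega)]
      norm_num
    · by_cases hq1 : q.val = n-1
      · rw [if_pos (Or.inr hq1), if_neg hq0, if_pos hq1]
        norm_num
      · rw [if_neg (by push_neg; exact ⟨hq0, hq1⟩), if_neg hq0, if_neg hq1]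
        norm_num
  -- J * M = 0
  have hJM : J * M = 0 := by
    ext p q
    rw [Matrix.mul_apply]
    have h1 : ∀ j : Fin n, J p j * M j q = M q j := by
      intro j
      have h2 : M j q = M q j := congrFun (congrFun hMsym q) j
      simp [hJ, h2]
    rw [Finset.sum_congr rfl (fun j _ => h1 j)]
    exact MrowsumP hn q
  have hEL : E * L = L := by
    rw [hEdef, Matrix.sub_mul, Matrix.one_mul, Matrix.smul_mul, hJL, smul_zero, sub_zero]
  have hEM : E * M = M := by
    rw [hEdef, Matrix.sub_mul, Matrix.one_mul, Matrix.smul_mul, hJM, smul_zero, sub_zero]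
  -- Penrose conditions for M
  have c1 : L * M * L = L := by rw [hLM, hEL]
  have c2 : M * L * M = M := by rw [hML, hEM]
  have c3 : (L * M)ᵀ = L * M := by rw [hLM, hEsym]
  have c4 : (M * L)ᵀ = M * L := by rw [hML, hEsym]
  -- uniqueness of the pseudoinverse
  have hAB : L * Lp = L * M := by
    calc L * Lp = (L * M * L) * Lp := by rw [c1]
      _ = (L * M) * (L * Lp) := by rw [Matrix.mul_assoc]
      _ = (L * M)ᵀ * (L * Lp)ᵀ := by rw [c3, hp3]
      _ = Mᵀ * (L * Lp * L)ᵀ := by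
          simp only [Matrix.transpose_mul, Matrix.mul_assoc]
      _ = Mᵀ * Lᵀ := by rw [hp1]
      _ = (L * M)ᵀ := (Matrix.transpose_mul L M).symm
      _ = L * M := c3
  have hBA : Lp * L = M * L := by
    calc Lp * L = Lp * (L * M * L) := by rw [c1]
      _ = (Lp * L) * (M * L) := by rw [Matrix.mul_assoc, Matrix.mul_assoc]
      _ = (Lp * L)ᵀ * (M * L)ᵀ := by rw [hp4, c4]
      _ = (L * Lp * L)ᵀ * Mᵀ := by
          simp only [Matrix.transpose_mul, Matrix.mul_assoc]
      _ = Lᵀ * Mᵀ := by rw [hp1]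
      _ = (M * L)ᵀ := (Matrix.transpose_mul M L).symm
      _ = M * L := c4
  have hLpM : Lp = M := by
    calc Lp = Lp * L * Lp := hp2.symm
      _ = (M * L) * Lp := by rw [hBA]
      _ = M * (L * Lp) := by rw [Matrix.mul_assoc]
      _ = M * (L * M) := by rw [hAB]
      _ = M * L * M := by rw [Matrix.mul_assoc]
      _ = M := c2
  rw [hLpM]
  show mP n j'.val j'.val = _
  unfold mP rhoP
  rw [sub_self, abs_zero]
  field_simp
  ring
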